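/- Let v₁, v₂ ∈ ℝ² be linearly independent and let Λ = {a·v₁ + b·v₂ : a, b ∈ ℤ} be the lattice they generate. Suppose ⋃_{p∈Λ} closedBall(p, 1) = ℝ² and suppose there exists w ∈ Λ with w ≠ 0 and ‖w‖ ≤ 1. Then det(Λ) = |v₁.1·v₂.2 − v₁.2·v₂.1| ≤ 1 + √3/2. -/

import Mathlib

open Metric

noncomputable section

/-- The Euclidean plane. -/
abbrev Pt := EuclideanSpace ℝ (Fin 2)

/-- The lattice generated by `v₁` and `v₂`. -/
def lattice (v₁ v₂ : Pt) : Set Pt := {p | ∃ a b : ℤ, p = (a : ℝ) • v₁ + (b : ℝ) • v₂}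

/-- The determinant of the lattice generated by `v₁` and `v₂`. -/
def latticeDet (v₁ v₂ : Pt) : ℝ := |v₁ 0 * v₂ 1 - v₁ 1 * v₂ 0|

private lemma key_ineq (ℓ t s3 : ℝ) (hl0 : 0 < ℓ) (hl1 : ℓ ≤ 1) (ht0 : 0 ≤ t)
    (ht2 : t ^ 2 = 1 - ℓ ^ 2 / 4) (hs30 : 0 ≤ s3) (hs32 : s3 ^ 2 = 3) :
    ℓ * (1 + t) ≤ 1 + s3 / 2 := by
  have h1 : (2 * ℓ * t) ^ 2 ≤ s3 ^ 2 := by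
    rw [hs32]
    nlinarith [mul_nonneg (by nlinarith : (0:ℝ) ≤ 1 - ℓ ^ 2) (by nlinarith : (0:ℝ) ≤ 3 - ℓ ^ 2), ht2]
  have h2 : 2 * ℓ * t ≤ s3 := by
    calc 2 * ℓ * t = Real.sqrt ((2 * ℓ * t) ^ 2) := (Real.sqrt_sq (by positivity)).symm
      _ ≤ Real.sqrt (s3 ^ 2) := Real.sqrt_le_sqrt h1
      _ = s3 := Real.sqrt_sq hs30
  nlinarith


private lemma aux_sq_le_one (a : ℝ) (ha : 0 ≤ a) (h : Real.sqrt a ≤ 1) : a ≤ 1 := by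
  nlinarith [Real.sq_sqrt ha, Real.sqrt_nonneg a]

private lemma aux_le_one (x g : ℝ) (hx : 0 ≤ x) (hg : 1 ≤ g) (h : g * x ≤ 1) : x ≤ 1 := by
  nlinarith

private lemma aux_quarter (ℓ : ℝ) (hl0 : 0 < ℓ) (hl1 : ℓ ≤ 1) : 0 ≤ 1 - ℓ ^ 2 / 4 := by
  nlinarith

private lemma aux_h (ℓ t s3 Dv : ℝ) (hl0 : 0 < ℓ) (hkey : ℓ * (1 + t) ≤ 1 + s3 / 2)
    (hbig : 1 + s3 / 2 < Dv) : 1 + t < Dv / ℓ := by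
  rw [lt_div_iff₀ hl0]
  nlinarith

private lemma aux_y (ℓ h t : ℝ) (hh : 1 + t < h) (ht0 : 0 ≤ t) (ht2 : t ^ 2 = 1 - ℓ ^ 2 / 4) :
    0 < (h - 1 + t) / 2 ∧ 1 < h - (h - 1 + t) / 2 ∧
      1 < ℓ ^ 2 / 4 + ((h - 1 + t) / 2) ^ 2 ∧ 1 < h := by
  refine ⟨by linarith, by linarith, ?_, by linarith⟩
  nlinarith [mul_pos (show 0 < (h - 1 + t) / 2 - t by linarith)
    (show 0 < (h - 1 + t) / 2 + t by linarith)]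

set_option maxHeartbeats 2000000 in
private lemma core_contra (ℓ y h Dv E X Y P Q Su : ℝ) (m n : ℤ)
    (hl0 : 0 < ℓ)
    (hS' : X ^ 2 + Y ^ 2 ≤ 1)
    (hLag : (X ^ 2 + Y ^ 2) * ℓ ^ 2 = P ^ 2 + Q ^ 2)
    (hQval : Q = y * ℓ - (n : ℝ) * E)
    (hPval : P = (1 / 2 - (m : ℝ)) * ℓ ^ 2 - (n : ℝ) * Su)
    (hDE : |E| = Dv)
    (hDv : Dv = h * ℓ)
    (hDpos : 0 < Dv)
    (hy0 : 0 < y)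
    (hhy : 1 < h - y)
    (hy1 : 1 < ℓ ^ 2 / 4 + y ^ 2)
    (hh1 : 1 < h) : False := by
  rcases eq_or_ne n 0 with hn | hn
  · have hn0 : (n : ℝ) = 0 := by rw [hn]; norm_num
    have hm : (1 / 2 - (m : ℝ)) ^ 2 ≥ 1 / 4 := by
      rcases le_or_gt m 0 with h' | h'
      · have : (m : ℝ) ≤ 0 := by exact_mod_cast h'
        nlinarith
      · have : (1 : ℝ) ≤ (m : ℝ) := by exact_mod_cast h'
        nlinarith
    have hPsq : P ^ 2 ≥ ℓ ^ 4 / 4 := by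
      rw [hPval, hn0]
      nlinarith [sq_nonneg (ℓ ^ 2), hm]
    have hQsq : Q ^ 2 = y ^ 2 * ℓ ^ 2 := by rw [hQval, hn0]; ring
    nlinarith [hLag, hS', hy1, mul_pos hl0 hl0, sq_nonneg ℓ]
  · have hEc : E = Dv ∨ E = -Dv := by
      rcases abs_cases E with ⟨h1, _⟩ | ⟨h1, _⟩
      · left; rw [← hDE, h1]
      · right; rw [← hDE, h1, neg_neg]
    have hnc : (1 : ℝ) ≤ (n : ℝ) ∨ (n : ℝ) ≤ -1 := by
      rcases lt_or_gt_of_ne hn with h' | h'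
      · right; exact_mod_cast (by omega : n ≤ -1)
      · left; exact_mod_cast (by omega : 1 ≤ n)
    have hhl : 0 < h * ℓ := hDv ▸ hDpos
    have hnE : (n : ℝ) * E ≥ h * ℓ ∨ (n : ℝ) * E ≤ -(h * ℓ) := by
      rcases hEc with hE' | hE' <;> rcases hnc with hn' | hn'
      · left
        have h2 : 1 * (h * ℓ) ≤ (n : ℝ) * (h * ℓ) :=
          mul_le_mul_of_nonneg_right hn' (le_of_lt hhl)
        rw [hE', hDv]; linarith
      · right
        have h1 : (1 : ℝ) ≤ -(n : ℝ) := by linarith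
        have h2 : 1 * (h * ℓ) ≤ (-(n : ℝ)) * (h * ℓ) :=
          mul_le_mul_of_nonneg_right h1 (le_of_lt hhl)
        rw [hE', hDv]; nlinarith [h2]
      · right
        have h2 : 1 * (h * ℓ) ≤ (n : ℝ) * (h * ℓ) :=
          mul_le_mul_of_nonneg_right hn' (le_of_lt hhl)
        rw [hE', hDv]; nlinarith [h2]
      · left
        have h1 : (1 : ℝ) ≤ -(n : ℝ) := by linarith
        have h2 : 1 * (h * ℓ) ≤ (-(n : ℝ)) * (h * ℓ) :=
          mul_le_mul_of_nonneg_right h1 (le_of_lt hhl)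
        rw [hE', hDv]; nlinarith [h2]
    have hQbig : Q ^ 2 > ℓ ^ 2 := by
      rcases hnE with h' | h'
      · have hQle : Q ≤ (y - h) * ℓ := by rw [hQval]; nlinarith
        have h3 : ℓ < (h - y) * ℓ := by
          nlinarith [mul_lt_mul_of_pos_right (show (1:ℝ) < h - y from hhy) hl0]
        have h4 : ℓ < -Q := by nlinarith [hQle]
        nlinarith [mul_self_lt_mul_self (le_of_lt hl0) h4]
      · have hQge : Q ≥ (y + h) * ℓ := by rw [hQval]; nlinarith
        have h3 : ℓ < (y + h) * ℓ := by
          nlinarith [mul_lt_mul_of_pos_right (show (1:ℝ) < y + h by linarith) hl0]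
        have h4 : ℓ < Q := by linarith
        nlinarith [mul_self_lt_mul_self (le_of_lt hl0) h4]
    nlinarith [hLag, hS', sq_nonneg P, mul_pos hl0 hl0]

set_option maxHeartbeats 2000000 in
/-- If the unit disks centered at the points of the lattice generated by `v₁, v₂` cover the
plane and some nonzero lattice vector has norm at most 1, then the lattice determinant is at
most `1 + √3/2`. -/
theorem lattice_det_le (v₁ v₂ : Pt)
    (hli : LinearIndependent ℝ ![v₁, v₂])
    (hcover : (⋃ p ∈ lattice v₁ v₂, closedBall p 1) = Set.univ)
    (hshort : ∃ w ∈ lattice v₁ v₂, w ≠ 0 ∧ ‖w‖ ≤ 1) :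
    latticeDet v₁ v₂ ≤ 1 + Real.sqrt 3 / 2 := by
  by_contra hDle
  push_neg at hDle
  obtain ⟨w, ⟨a, b, hw⟩, hw0, hwle⟩ := hshort
  have hab : ¬(a = 0 ∧ b = 0) := by
    rintro ⟨rfl, rfl⟩
    apply hw0; rw [hw]; simp
  have hgcdpos : 0 < Int.gcd a b := by
    rcases Nat.eq_zero_or_pos (Int.gcd a b) with h | h
    · exact absurd (Int.gcd_eq_zero_iff.mp h) hab
    · exact h
  obtain ⟨g, hgdef⟩ : ∃ g : ℤ, g = (Int.gcd a b : ℤ) := ⟨_, rfl⟩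
  have hgpos : 0 < g := by rw [hgdef]; exact_mod_cast hgcdpos
  obtain ⟨a', ha'def⟩ : ∃ x : ℤ, x = a / g := ⟨_, rfl⟩
  obtain ⟨b', hb'def⟩ : ∃ x : ℤ, x = b / g := ⟨_, rfl⟩
  have ha : a = g * a' := by
    rw [ha'def, hgdef]; exact (Int.mul_ediv_cancel' (Int.gcd_dvd_left a b)).symm
  have hb : b = g * b' := by
    rw [hb'def, hgdef]; exact (Int.mul_ediv_cancel' (Int.gcd_dvd_right a b)).symm
  have hcop : Int.gcd a' b' = 1 := by
    rw [ha'def, hb'def, hgdef]; exact Int.gcd_div_gcd_div_gcd hgcdpos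
  obtain ⟨d, hddef⟩ : ∃ x : ℤ, x = Int.gcdA a' b' := ⟨_, rfl⟩
  obtain ⟨c, hcdef⟩ : ∃ x : ℤ, x = -Int.gcdB a' b' := ⟨_, rfl⟩
  have hbz : (1 : ℤ) = a' * Int.gcdA a' b' + b' * Int.gcdB a' b' := by
    have := Int.gcd_eq_gcd_ab a' b'
    rw [hcop] at this
    exact_mod_cast this
  have hdc : a' * d - b' * c = 1 := by rw [hcdef, hddef]; linear_combination -hbz
  have hdcR : (a' : ℝ) * d - (b' : ℝ) * c = 1 := by exact_mod_cast hdc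
  obtain ⟨w0, hw0def⟩ : ∃ x : ℝ, x = (a' : ℝ) * v₁ 0 + (b' : ℝ) * v₂ 0 := ⟨_, rfl⟩
  obtain ⟨w1, hw1def⟩ : ∃ x : ℝ, x = (a' : ℝ) * v₁ 1 + (b' : ℝ) * v₂ 1 := ⟨_, rfl⟩
  obtain ⟨u0, hu0def⟩ : ∃ x : ℝ, x = (c : ℝ) * v₁ 0 + (d : ℝ) * v₂ 0 := ⟨_, rfl⟩
  obtain ⟨u1, hu1def⟩ : ∃ x : ℝ, x = (c : ℝ) * v₁ 1 + (d : ℝ) * v₂ 1 := ⟨_, rfl⟩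
  obtain ⟨W, hWdef⟩ : ∃ x : Pt, x = (a' : ℝ) • v₁ + (b' : ℝ) • v₂ := ⟨_, rfl⟩
  have hW0 : W 0 = w0 := by rw [hWdef, hw0def]; simp
  have hW1 : W 1 = w1 := by rw [hWdef, hw1def]; simp
  have hwg : w = (g : ℝ) • W := by
    rw [hw, ha, hb, hWdef]
    push_cast
    module
  have hWne : W ≠ 0 := by
    intro h
    apply hw0
    rw [hwg, h, smul_zero]
  obtain ⟨ℓ, hldef⟩ : ∃ x : ℝ, x = ‖W‖ := ⟨_, rfl⟩
  have hl0 : 0 < ℓ := by rw [hldef]; exact norm_pos_iff.mpr hWne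
  have hl1 : ℓ ≤ 1 := by
    have hn : ‖w‖ = (g : ℝ) * ℓ := by
      rw [hldef, hwg, norm_smul, Real.norm_eq_abs, abs_of_pos (by exact_mod_cast hgpos)]
    have hg1 : (1 : ℝ) ≤ (g : ℝ) := by exact_mod_cast hgpos
    exact aux_le_one ℓ (g : ℝ) (le_of_lt hl0) hg1 (by rw [← hn]; exact hwle)
  have hℓ2 : ℓ ^ 2 = w0 ^ 2 + w1 ^ 2 := by
    rw [hldef, EuclideanSpace.norm_eq, Real.sq_sqrt (by positivity)]
    simp [Fin.sum_univ_two, sq_abs, hW0, hW1]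
  obtain ⟨E, hEdef⟩ : ∃ x : ℝ, x = w0 * u1 - w1 * u0 := ⟨_, rfl⟩
  have hE : E = v₁ 0 * v₂ 1 - v₁ 1 * v₂ 0 := by
    rw [hEdef, hw0def, hw1def, hu0def, hu1def]
    linear_combination (v₁ 0 * v₂ 1 - v₁ 1 * v₂ 0) * hdcR
  obtain ⟨Dv, hDvdef⟩ : ∃ x : ℝ, x = latticeDet v₁ v₂ := ⟨_, rfl⟩
  have hDE : |E| = Dv := by rw [hE, hDvdef, latticeDet]
  have hDbig : 1 + Real.sqrt 3 / 2 < Dv := by rw [hDvdef]; exact hDle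
  have hDpos : 0 < Dv := lt_trans (by positivity) hDbig
  obtain ⟨t, htdef⟩ : ∃ x : ℝ, x = Real.sqrt (1 - ℓ ^ 2 / 4) := ⟨_, rfl⟩
  have ht0 : 0 ≤ t := htdef ▸ Real.sqrt_nonneg _
  have ht2 : t ^ 2 = 1 - ℓ ^ 2 / 4 := by rw [htdef]; exact Real.sq_sqrt (aux_quarter ℓ hl0 hl1)
  obtain ⟨s3, hs3def⟩ : ∃ x : ℝ, x = Real.sqrt 3 := ⟨_, rfl⟩
  have hs30 : 0 ≤ s3 := hs3def ▸ Real.sqrt_nonneg _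
  have hs32 : s3 ^ 2 = 3 := by rw [hs3def]; exact Real.sq_sqrt (by norm_num)
  have hDbig' : 1 + s3 / 2 < Dv := by rw [hs3def]; exact hDbig
  have hkey : ℓ * (1 + t) ≤ 1 + s3 / 2 := key_ineq ℓ t s3 hl0 hl1 ht0 ht2 hs30 hs32
  obtain ⟨h, hhdef⟩ : ∃ x : ℝ, x = Dv / ℓ := ⟨_, rfl⟩
  have hDv : Dv = h * ℓ := by rw [hhdef]; field_simp
  have hh : 1 + t < h := by
    rw [hhdef]; exact aux_h ℓ t s3 Dv hl0 hkey hDbig'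
  obtain ⟨y, hydef⟩ : ∃ x : ℝ, x = (h - 1 + t) / 2 := ⟨_, rfl⟩
  obtain ⟨hy0, hhy, hy1, hh1⟩ := hydef ▸ aux_y ℓ h t hh ht0 ht2
  obtain ⟨p, hpdef⟩ : ∃ x : Pt,
      x = (WithLp.equiv 2 (Fin 2 → ℝ)).symm ![w0 / 2 - y * w1 / ℓ, w1 / 2 + y * w0 / ℓ] := ⟨_, rfl⟩
  have hp0 : p 0 = w0 / 2 - y * w1 / ℓ := by rw [hpdef]; simp
  have hp1 : p 1 = w1 / 2 + y * w0 / ℓ := by rw [hpdef]; simp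
  have hpmem : p ∈ ⋃ q ∈ lattice v₁ v₂, closedBall q 1 := by
    rw [hcover]; trivial
  simp only [Set.mem_iUnion, exists_prop] at hpmem
  obtain ⟨q, ⟨a₂, b₂, hq⟩, hpq⟩ := hpmem
  have hdist : dist p q ≤ 1 := mem_closedBall.mp hpq
  have hq0 : q 0 = (a₂ : ℝ) * v₁ 0 + (b₂ : ℝ) * v₂ 0 := by rw [hq]; simp
  have hq1 : q 1 = (a₂ : ℝ) * v₁ 1 + (b₂ : ℝ) * v₂ 1 := by rw [hq]; simp
  obtain ⟨m, hmdef⟩ : ∃ x : ℤ, x = d * a₂ - c * b₂ := ⟨_, rfl⟩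
  obtain ⟨n, hndef⟩ : ∃ x : ℤ, x = -b' * a₂ + a' * b₂ := ⟨_, rfl⟩
  have hqm0 : q 0 = (m : ℝ) * w0 + (n : ℝ) * u0 := by
    rw [hq0, hmdef, hndef, hw0def, hu0def]
    push_cast
    linear_combination (-((a₂ : ℝ) * v₁ 0 + (b₂ : ℝ) * v₂ 0)) * hdcR
  have hqm1 : q 1 = (m : ℝ) * w1 + (n : ℝ) * u1 := by
    rw [hq1, hmdef, hndef, hw1def, hu1def]
    push_cast
    linear_combination (-((a₂ : ℝ) * v₁ 1 + (b₂ : ℝ) * v₂ 1)) * hdcR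
  have hS : (p 0 - q 0) ^ 2 + (p 1 - q 1) ^ 2 ≤ 1 := by
    rw [EuclideanSpace.dist_eq] at hdist
    have hnn : (0:ℝ) ≤ ∑ i, dist (p i) (q i) ^ 2 := by positivity
    have h2 : ∑ i, dist (p i) (q i) ^ 2 ≤ 1 := aux_sq_le_one _ hnn hdist
    rw [Fin.sum_univ_two] at h2
    simpa [Real.dist_eq, sq_abs] using h2
  obtain ⟨X, hXdef⟩ : ∃ x : ℝ, x = p 0 - q 0 := ⟨_, rfl⟩
  obtain ⟨Y, hYdef⟩ : ∃ x : ℝ, x = p 1 - q 1 := ⟨_, rfl⟩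
  have hS' : X ^ 2 + Y ^ 2 ≤ 1 := by rw [hXdef, hYdef]; exact hS
  obtain ⟨P, hPdef⟩ : ∃ x : ℝ, x = X * w0 + Y * w1 := ⟨_, rfl⟩
  obtain ⟨Q, hQdef⟩ : ∃ x : ℝ, x = Y * w0 - X * w1 := ⟨_, rfl⟩
  have hLag : (X ^ 2 + Y ^ 2) * ℓ ^ 2 = P ^ 2 + Q ^ 2 := by
    rw [hPdef, hQdef, hℓ2]; ring
  have hQval : Q = y * ℓ - (n : ℝ) * E := by
    rw [hQdef, hXdef, hYdef, hp0, hp1, hqm0, hqm1, hEdef]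
    field_simp
    linear_combination (-2*y) * hℓ2
  have hPval : P = (1 / 2 - (m : ℝ)) * ℓ ^ 2 - (n : ℝ) * (u0 * w0 + u1 * w1) := by
    rw [hPdef, hXdef, hYdef, hp0, hp1, hqm0, hqm1]
    field_simp
    linear_combination (-2*(1 / 2 - (m : ℝ)) * ℓ) * hℓ2
  exact core_contra ℓ y h Dv E X Y P Q (u0 * w0 + u1 * w1) m n
    hl0 hS' hLag hQval hPval hDE hDv hDpos hy0 hhy hy1 hh1

end
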